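/- Given nonnegative reals representing a performance gap Δ_ρ = ρ^{π*,R̄} - max_{π ∈ Π_adm} ρ^{π,R̄} ≥ 0, the relative value Φ of the optimal surrogate solution satisfies the lower bound Φ ≥ (λ + (1-γ)/2) · Δ_ρ. -/

import Mathlib

open scoped BigOperators

/-- A finite Markov decision process with discount factor `γ ∈ [0,1)` and initial
state distribution `init`. -/
structure MDP (S A : Type*) [Fintype S] [Fintype A] where
  P : S → A → S → ℝ
  init : S → ℝ
  γ : ℝ
  P_nonneg : ∀ s a s', 0 ≤ P s a s'
  P_sum : ∀ s a, ∑ s', P s a s' = 1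
  init_nonneg : ∀ s, 0 ≤ init s
  init_sum : ∑ s, init s = 1
  γ_nonneg : 0 ≤ γ
  γ_lt_one : γ < 1

variable {S A : Type*} [Fintype S] [Fintype A]

/-- One-step evolution of a state distribution under policy `π`. -/
def MDP.step (M : MDP S A) (π : S → A) (d : S → ℝ) : S → ℝ :=
  fun s' => ∑ s, d s * M.P s (π s) s'

/-- Distribution of the state `s_{t+1}` when executing `π` from `s_1 ~ init`. -/
def MDP.stateDist (M : MDP S A) (π : S → A) : ℕ → S → ℝ
  | 0 => M.init
  | t + 1 => M.step π (M.stateDist π t)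

/-- Discounted state occupancy measure
`μ^π(s) = E[(1-γ) ∑_{t ≥ 1} γ^{t-1} 1{s_t = s}]`. -/
noncomputable def MDP.occ (M : MDP S A) (π : S → A) (s : S) : ℝ :=
  (1 - M.γ) * ∑' t : ℕ, M.γ ^ t * M.stateDist π t s

/-- The score `ρ^{π,R} = E[(1-γ) ∑_{t ≥ 1} γ^{t-1} R(s_t, a_t)]` of policy `π`. -/
noncomputable def MDP.score (M : MDP S A) (π : S → A) (R : S → A → ℝ) : ℝ :=
  (1 - M.γ) * ∑' t : ℕ, M.γ ^ t * ∑ s, M.stateDist π t s * R s (π s)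

/-- Distribution of the state `t+1` steps after taking action `a0` in state `s0`
and following `π` afterwards. -/
def MDP.stateDistFrom (M : MDP S A) (π : S → A) (s0 : S) (a0 : A) : ℕ → S → ℝ
  | 0 => M.P s0 a0
  | t + 1 => M.step π (M.stateDistFrom π s0 a0 t)

/-- State-action value
`Q^{π,R}(s,a) = E[∑_{t ≥ 1} γ^{t-1} R(s_t,a_t) | s_1 = s, a_1 = a, then follow π]`. -/
noncomputable def MDP.Q (M : MDP S A) (π : S → A) (R : S → A → ℝ) (s : S) (a : A) : ℝ :=
  R s a + ∑' t : ℕ, M.γ ^ (t + 1) * ∑ s', M.stateDistFrom π s a t s' * R s' (π s')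

/-- Euclidean (`L2`) distance between two reward functions. -/
noncomputable def rdist (R R' : S → A → ℝ) : ℝ :=
  Real.sqrt (∑ s, ∑ a, (R s a - R' s a) ^ 2)

/-- The set `OPT^ε_det(R)` of `ε`-optimal deterministic policies under reward `R`. -/
noncomputable def MDP.OPT (M : MDP S A) (R : S → A → ℝ) (ε : ℝ) : Set (S → A) :=
  {π | M.score π R > (⨆ π' : S → A, M.score π' R) - ε}

/-- A pair `(π, R)` is feasible for the surrogate problem P4: `π` is admissible and
every `ε`-optimal policy under `R` agrees with `π` on all states that `π` visits with
positive occupancy. -/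
def feasible4 (M : MDP S A) (ε : ℝ) (Padm : Set (S → A))
    (π : S → A) (R : S → A → ℝ) : Prop :=
  π ∈ Padm ∧ M.OPT R ε ⊆ {π' | ∀ s, 0 < M.occ π s → π' s = π s}

/-- The objective of the surrogate problem P4. -/
noncomputable def objective4 (M : MDP S A) (Rbar : S → A → ℝ) (lam : ℝ)
    (π : S → A) (R : S → A → ℝ) : ℝ :=
  rdist Rbar R - lam * M.score π Rbar


section Aux

variable {S A : Type*} [Fintype S] [Fintype A]

lemma sd_nonneg (M : MDP S A) (π : S → A) : ∀ t s, 0 ≤ M.stateDist π t s := by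
  intro t
  induction t with
  | zero => exact M.init_nonneg
  | succ t ih =>
    intro s'
    exact Finset.sum_nonneg fun s _ => mul_nonneg (ih s) (M.P_nonneg s (π s) s')

lemma sd_sum (M : MDP S A) (π : S → A) : ∀ t, ∑ s, M.stateDist π t s = 1 := by
  intro t
  induction t with
  | zero => exact M.init_sum
  | succ t ih =>
    show ∑ s', ∑ s, M.stateDist π t s * M.P s (π s) s' = 1
    rw [Finset.sum_comm]
    simp_rw [← Finset.mul_sum, M.P_sum, mul_one]
    exact ih

lemma sd_le_one (M : MDP S A) (π : S → A) (t : ℕ) (s : S) : M.stateDist π t s ≤ 1 := by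
  rw [← sd_sum M π t]
  exact Finset.single_le_sum (fun s' _ => sd_nonneg M π t s') (Finset.mem_univ s)

lemma weighted_abs_le (M : MDP S A) (π : S → A) (t : ℕ) (f : S → ℝ) (C : ℝ)
    (hf : ∀ s, |f s| ≤ C) : |∑ s, M.stateDist π t s * f s| ≤ C := by
  calc |∑ s, M.stateDist π t s * f s| ≤ ∑ s, |M.stateDist π t s * f s| :=
        Finset.abs_sum_le_sum_abs _ _
    _ ≤ ∑ s, M.stateDist π t s * C := by
        apply Finset.sum_le_sum
        intro s _
        rw [abs_mul, abs_of_nonneg (sd_nonneg M π t s)]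
        exact mul_le_mul_of_nonneg_left (hf s) (sd_nonneg M π t s)
    _ = C := by rw [← Finset.sum_mul, sd_sum, one_mul]

lemma summable_geom_bound (M : MDP S A) (g : ℕ → ℝ) (C : ℝ) (hg : ∀ t, |g t| ≤ C) :
    Summable fun t => M.γ ^ t * g t := by
  apply Summable.of_norm_bounded (g := fun t => C * M.γ ^ t)
    ((summable_geometric_of_lt_one M.γ_nonneg M.γ_lt_one).mul_left C)
  intro t
  rw [Real.norm_eq_abs, abs_mul, abs_of_nonneg (pow_nonneg M.γ_nonneg t), mul_comm]
  exact mul_le_mul_of_nonneg_right (hg t) (pow_nonneg M.γ_nonneg t)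

lemma abs_le_rdist (Rbar R : S → A → ℝ) (s : S) (a : A) :
    |Rbar s a - R s a| ≤ rdist Rbar R := by
  rw [← Real.sqrt_sq_eq_abs]
  apply Real.sqrt_le_sqrt
  calc (Rbar s a - R s a) ^ 2 ≤ ∑ a', (Rbar s a' - R s a') ^ 2 :=
        Finset.single_le_sum (f := fun a' => (Rbar s a' - R s a') ^ 2)
          (fun a' _ => sq_nonneg _) (Finset.mem_univ a)
    _ ≤ ∑ s', ∑ a', (Rbar s' a' - R s' a') ^ 2 :=
        Finset.single_le_sum (f := fun s' => ∑ a', (Rbar s' a' - R s' a') ^ 2)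
          (fun s' _ => Finset.sum_nonneg fun a' _ => sq_nonneg _) (Finset.mem_univ s)

lemma abs_R_le (R : S → A → ℝ) (s : S) (a : A) : |R s a| ≤ ∑ s', ∑ a', |R s' a'| := by
  calc |R s a| ≤ ∑ a', |R s a'| :=
        Finset.single_le_sum (f := fun a' => |R s a'|)
          (fun _ _ => abs_nonneg _) (Finset.mem_univ a)
    _ ≤ ∑ s', ∑ a', |R s' a'| :=
        Finset.single_le_sum (f := fun s' => ∑ a', |R s' a'|)
          (fun _ _ => Finset.sum_nonneg fun _ _ => abs_nonneg _) (Finset.mem_univ s)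

lemma summable_score (M : MDP S A) (π : S → A) (R : S → A → ℝ) :
    Summable fun t => M.γ ^ t * ∑ s, M.stateDist π t s * R s (π s) :=
  summable_geom_bound M _ _ fun t =>
    weighted_abs_le M π t _ _ fun s => abs_R_le R s (π s)


lemma score_diff_le (M : MDP S A) (π : S → A) (Rbar R : S → A → ℝ) :
    |M.score π Rbar - M.score π R| ≤ rdist Rbar R := by
  have h1γ : 0 < 1 - M.γ := by linarith [M.γ_lt_one]
  have habs : ∀ t, |∑ s, M.stateDist π t s * (Rbar s (π s) - R s (π s))| ≤ rdist Rbar R :=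
    fun t => weighted_abs_le M π t _ _ fun s => abs_le_rdist Rbar R s (π s)
  have hsummable : Summable fun t =>
      M.γ ^ t * ∑ s, M.stateDist π t s * (Rbar s (π s) - R s (π s)) :=
    summable_geom_bound M _ _ habs
  have hpt : ∀ t : ℕ,
      (M.γ ^ t * ∑ s, M.stateDist π t s * Rbar s (π s)) -
        M.γ ^ t * ∑ s, M.stateDist π t s * R s (π s)
      = M.γ ^ t * ∑ s, M.stateDist π t s * (Rbar s (π s) - R s (π s)) := by
    intro t
    rw [← mul_sub, ← Finset.sum_sub_distrib]
    exact congrArg _ (Finset.sum_congr rfl fun s _ => (mul_sub _ _ _).symm)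
  have hts : (∑' t, M.γ ^ t * ∑ s, M.stateDist π t s * Rbar s (π s)) -
      (∑' t, M.γ ^ t * ∑ s, M.stateDist π t s * R s (π s))
      = ∑' t, M.γ ^ t * ∑ s, M.stateDist π t s * (Rbar s (π s) - R s (π s)) := by
    rw [← Summable.tsum_sub (summable_score M π Rbar) (summable_score M π R)]
    exact tsum_congr hpt
  have hsub : M.score π Rbar - M.score π R
      = (1 - M.γ) * ∑' t, M.γ ^ t * ∑ s, M.stateDist π t s * (Rbar s (π s) - R s (π s)) := by
    rw [MDP.score, MDP.score, ← mul_sub, hts]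
  rw [hsub, abs_mul, abs_of_pos h1γ]
  have h1 : |∑' t, M.γ ^ t * ∑ s, M.stateDist π t s * (Rbar s (π s) - R s (π s))|
      ≤ ∑' t, |M.γ ^ t * ∑ s, M.stateDist π t s * (Rbar s (π s) - R s (π s))| := by
    have hn : Summable fun t => ‖M.γ ^ t * ∑ s, M.stateDist π t s * (Rbar s (π s) - R s (π s))‖ := by
      simpa only [Real.norm_eq_abs] using hsummable.abs
    simpa only [Real.norm_eq_abs] using norm_tsum_le_tsum_norm hn
  have h2 : (∑' t, |M.γ ^ t * ∑ s, M.stateDist π t s * (Rbar s (π s) - R s (π s))|)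
      ≤ ∑' t, rdist Rbar R * M.γ ^ t := by
    apply Summable.tsum_le_tsum _ hsummable.abs
      ((summable_geometric_of_lt_one M.γ_nonneg M.γ_lt_one).mul_left _)
    intro t
    rw [abs_mul, abs_of_nonneg (pow_nonneg M.γ_nonneg t), mul_comm]
    exact mul_le_mul_of_nonneg_right (habs t) (pow_nonneg M.γ_nonneg t)
  have h3 : (∑' t, rdist Rbar R * M.γ ^ t) = rdist Rbar R * (1 - M.γ)⁻¹ := by
    rw [tsum_mul_left, tsum_geometric_of_lt_one M.γ_nonneg M.γ_lt_one]
  have h4 := le_trans h1 (h3 ▸ h2)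
  calc (1 - M.γ) * |∑' t, M.γ ^ t * ∑ s, M.stateDist π t s * (Rbar s (π s) - R s (π s))|
      ≤ (1 - M.γ) * (rdist Rbar R * (1 - M.γ)⁻¹) := mul_le_mul_of_nonneg_left h4 h1γ.le
    _ = rdist Rbar R := by field_simp

lemma occ_pos_of (M : MDP S A) (π : S → A) (t : ℕ) (s : S)
    (h : 0 < M.γ ^ t * M.stateDist π t s) : 0 < M.occ π s := by
  have hsum : Summable fun t => M.γ ^ t * M.stateDist π t s := by
    apply summable_geom_bound M _ 1
    intro t
    rw [abs_of_nonneg (sd_nonneg M π t s)]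
    exact sd_le_one M π t s
  have hle : M.γ ^ t * M.stateDist π t s ≤ ∑' t, M.γ ^ t * M.stateDist π t s :=
    Summable.le_tsum hsum t fun j _ => mul_nonneg (pow_nonneg M.γ_nonneg j) (sd_nonneg M π j s)
  have h1γ : 0 < 1 - M.γ := by linarith [M.γ_lt_one]
  exact mul_pos h1γ (lt_of_lt_of_le h hle)

lemma agree_weighted_dist (M : MDP S A) (π π₂ : S → A)
    (h : ∀ s, 0 < M.occ π₂ s → π s = π₂ s) :
    ∀ t s, M.γ ^ t * M.stateDist π t s = M.γ ^ t * M.stateDist π₂ t s := by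
  intro t
  induction t with
  | zero => intro s; rfl
  | succ t ih =>
    intro s'
    have key : ∀ s, M.γ ^ t * M.stateDist π t s * M.P s (π s) s' =
        M.γ ^ t * M.stateDist π₂ t s * M.P s (π₂ s) s' := by
      intro s
      rw [ih s]
      rcases eq_or_lt_of_le
          (mul_nonneg (pow_nonneg M.γ_nonneg t) (sd_nonneg M π₂ t s)) with h0 | hpos
      · rw [← h0, zero_mul, zero_mul]
      · rw [h s (occ_pos_of M π₂ t s hpos)]
    have expand : ∀ ρ : S → A, M.γ ^ (t + 1) * M.stateDist ρ (t + 1) s' =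
        M.γ * ∑ s, M.γ ^ t * M.stateDist ρ t s * M.P s (ρ s) s' := by
      intro ρ
      show M.γ ^ (t + 1) * (∑ s, M.stateDist ρ t s * M.P s (ρ s) s') = _
      rw [pow_succ, mul_comm (M.γ ^ t) M.γ, mul_assoc, Finset.mul_sum]
      simp_rw [← mul_assoc]
    rw [expand π, expand π₂]
    congr 1
    exact Finset.sum_congr rfl fun s _ => key s

lemma agree_score (M : MDP S A) (π π₂ : S → A) (R : S → A → ℝ)
    (h : ∀ s, 0 < M.occ π₂ s → π s = π₂ s) :
    M.score π R = M.score π₂ R := by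
  unfold MDP.score
  congr 1
  apply tsum_congr
  intro t
  rw [Finset.mul_sum, Finset.mul_sum]
  apply Finset.sum_congr rfl
  intro s _
  rw [← mul_assoc, ← mul_assoc, agree_weighted_dist M π π₂ h t s]
  rcases eq_or_lt_of_le
      (mul_nonneg (pow_nonneg M.γ_nonneg t) (sd_nonneg M π₂ t s)) with h0 | hpos
  · rw [← h0, zero_mul, zero_mul]
  · rw [h s (occ_pos_of M π₂ t s hpos)]

end Aux

/-- Lower bound of Theorem 5. If `(π₂, R̂₂)` optimally solves the
surrogate problem P4 and `Δ_ρ = ρ^{π*,R̄} - max_{π ∈ Π_adm} ρ^{π,R̄} ≥ 0`, then the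
relative value `Φ = ‖R̄ - R̂₂‖₂ + λ (ρ^{π*,R̄} - ρ^{π₂,R̄})` satisfies
`Φ ≥ (λ + (1-γ)/2) · Δ_ρ`. -/


theorem stmt14 [DecidableEq S] [Nonempty A] (M : MDP S A) (Rbar : S → A → ℝ)
    (ε lam : ℝ) (hε : 0 < ε) (hlam : 0 ≤ lam)
    (Padm : Set (S → A)) (hne : Padm.Nonempty)
    (πst : S → A) (hopt : ∀ π : S → A, M.score π Rbar ≤ M.score πst Rbar)
    (π₂ : S → A) (R₂ : S → A → ℝ)
    (hfeas : feasible4 M ε Padm π₂ R₂)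
    (hbest : ∀ (π : S → A) (R : S → A → ℝ), feasible4 M ε Padm π R →
      objective4 M Rbar lam π₂ R₂ ≤ objective4 M Rbar lam π R) :
    (lam + (1 - M.γ) / 2) *
        (M.score πst Rbar - (⨆ π : Padm, M.score π.1 Rbar)) ≤
      rdist Rbar R₂ + lam * (M.score πst Rbar - M.score π₂ Rbar) := by
  
  obtain ⟨hadm, hsubOPT⟩ := hfeas
  obtain ⟨πm, hπm⟩ := Finite.exists_max fun π : S → A => M.score π R₂
  have hbdd : BddAbove (Set.range fun π : S → A => M.score π R₂) :=
    (Set.finite_range _).bddAbove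
  have hsup : (⨆ π' : S → A, M.score π' R₂) = M.score πm R₂ :=
    le_antisymm (ciSup_le hπm) (le_ciSup hbdd πm)
  have hmem : πm ∈ M.OPT R₂ ε := by
    show M.score πm R₂ > (⨆ π' : S → A, M.score π' R₂) - ε
    rw [hsup]; linarith
  have hagree : ∀ s, 0 < M.occ π₂ s → πm s = π₂ s := hsubOPT hmem
  have hscore_eq : M.score πm R₂ = M.score π₂ R₂ := agree_score M πm π₂ R₂ hagree
  have hopt2 : M.score πst R₂ ≤ M.score π₂ R₂ := hscore_eq ▸ hπm πst
  have d1 := abs_le.mp (score_diff_le M πst Rbar R₂)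
  have d2 := abs_le.mp (score_diff_le M π₂ Rbar R₂)
  have D2 : M.score πst Rbar - M.score π₂ Rbar ≤ 2 * rdist Rbar R₂ := by
    obtain ⟨d1l, d1r⟩ := d1; obtain ⟨d2l, d2r⟩ := d2; linarith
  haveI : Nonempty Padm := hne.to_subtype
  have hbddP : BddAbove (Set.range fun π : Padm => M.score π.1 Rbar) :=
    (Set.finite_range _).bddAbove
  have hsub2 : M.score π₂ Rbar ≤ ⨆ π : Padm, M.score π.1 Rbar :=
    le_ciSup hbddP ⟨π₂, hadm⟩
  have hsuple : (⨆ π : Padm, M.score π.1 Rbar) ≤ M.score πst Rbar :=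
    ciSup_le fun π => hopt π.1
  have hΔ0 : 0 ≤ M.score πst Rbar - ⨆ π : Padm, M.score π.1 Rbar := by linarith
  have hΔD : M.score πst Rbar - (⨆ π : Padm, M.score π.1 Rbar)
      ≤ M.score πst Rbar - M.score π₂ Rbar := by linarith
  have hγ := M.γ_nonneg
  nlinarith [mul_le_mul_of_nonneg_left hΔD hlam, mul_nonneg hγ hΔ0]
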